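/- For every $n \geq 1$, the induced map $k_!(\partial\Delta^n) \to k_!(\Delta^n) = B\pi(\Delta^n)$ is a monomorphism of simplicial sets, and $k_!(\partial\Delta^n)$ is isomorphic to the union of the images of the maps $B\pi(\Delta^{n-1}) \to B\pi(\Delta^n)$ induced by the coface maps $d^i$. -/

import Mathlib

open CategoryTheory CategoryTheory.Limits Simplicial Opposite

/-- The chaotic (indiscrete) category on a type: exactly one morphism between
any two objects. -/
def Chaotic (α : Type) : Type := α

instance {α : Type} : Category (Chaotic α) where
  Hom _ _ := Unit
  id _ := ⟨⟩
  comp _ _ := ⟨⟩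

/-- Any function induces a functor between chaotic categories. -/
def chaoticMap {α β : Type} (f : α → β) : Chaotic α ⥤ Chaotic β where
  obj := f
  map _ := ⟨⟩

instance {α : Type} (a b : Chaotic α) : Subsingleton (a ⟶ b) :=
  inferInstanceAs (Subsingleton Unit)

lemma chaoticFunctor_ext {α : Type} {C : Type} [Category C] (F G : C ⥤ Chaotic α)
    (h : ∀ X, F.obj X = G.obj X) : F = G :=
  CategoryTheory.Functor.ext h (fun _ _ _ => Subsingleton.elim _ _)

/-- The chaotic categories, as a cosimplicial category. -/
def chaoticCosimplicial : SimplexCategory ⥤ Cat where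
  obj n := Cat.of (Chaotic (Fin (n.len + 1)))
  map f := (chaoticMap f.toOrderHom).toCatHom
  map_id n := Cat.Hom.ext (chaoticFunctor_ext _ _ (fun _ => rfl))
  map_comp f g := Cat.Hom.ext (chaoticFunctor_ext _ _ (fun _ => rfl))

/-- The cosimplicial simplicial set `[n] ↦ B π (Δⁿ)`, the nerve of the chaotic
groupoid on `n + 1` objects (the nerve of the fundamental groupoid of `Δⁿ`). -/
def Bpi : SimplexCategory ⥤ SSet := chaoticCosimplicial ⋙ nerveFunctor

lemma chaoticCA_ext {k m : ℕ} (F G : ComposableArrows (Chaotic (Fin (k + 1))) m)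
    (h : ∀ i, F.obj i = G.obj i) : F = G :=
  CategoryTheory.Functor.ext h (fun _ _ _ => Subsingleton.elim _ _)

/-- The simplex of `B π (Δⁿ)` corresponding to a simplex of `Δⁿ`. -/
def simplexToChaotic {n : SimplexCategory} {m : SimplexCategoryᵒᵖ}
    (x : (SSet.stdSimplex.obj n).obj m) : (Bpi.obj n).obj m where
  obj i := (SSet.stdSimplex.objEquiv (n := n) (m := m) x).toOrderHom i
  map _ := ⟨⟩
  map_id _ := rfl
  map_comp _ _ := rfl

lemma Bpi_obj_map_obj {n : SimplexCategory} {m m' : SimplexCategoryᵒᵖ} (g : m ⟶ m')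
    (x : (Bpi.obj n).obj m) (i : Fin (m'.unop.len + 1)) :
    ((Bpi.obj n).map g x).obj i = x.obj (g.unop.toOrderHom i) := rfl

lemma Bpi_map_app_obj {a b : SimplexCategory} (f : a ⟶ b) {m : SimplexCategoryᵒᵖ}
    (x : (Bpi.obj a).obj m) (i : Fin (m.unop.len + 1)) :
    (((Bpi.map f).app m) x).obj i = f.toOrderHom (x.obj i) := rfl

/-- The natural inclusion `Δⁿ → B π (Δⁿ)`. -/
def stdToBpi : SSet.stdSimplex ⟶ Bpi where
  app n :=
    { app := fun _ => TypeCat.ofHom fun x => simplexToChaotic x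
      naturality := fun m m' g => by
        ext x
        apply chaoticCA_ext
        intro i
        rfl }
  naturality a b f := by
    apply NatTrans.ext; funext m; ext x
    apply chaoticCA_ext
    intro i
    rfl

/-- The fundamental `n`-simplex of `B π (Δⁿ)` (the string of arrows `0 → 1 → ⋯ → n`). -/
def spineEl (n : SimplexCategory) : (Bpi.obj n).obj (op n) where
  obj i := i
  map _ := ⟨⟩
  map_id _ := rfl
  map_comp _ _ := rfl

lemma spineEl_natural {a b : SimplexCategory} (f : a ⟶ b) :
    ((Bpi.map f).app (op a)) (spineEl a) = (Bpi.obj b).map f.op (spineEl b) := by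
  apply chaoticCA_ext
  intro i
  rfl

/-- The functor `k^!`, with `k^!(X)_n = Hom(Bπ(Δⁿ), X)`. -/
def kSh (X : SSet) : SSet where
  obj n := Bpi.obj n.unop ⟶ X
  map f := TypeCat.ofHom fun g => Bpi.map f.unop ≫ g
  map_id n := by ext g; simp
  map_comp f g := by ext h; simp

/-- `k^!` as a functor. -/
def kShF : SSet ⥤ SSet where
  obj := kSh
  map q := { app := fun _ => TypeCat.ofHom fun g => g ≫ q
             naturality := fun _ _ f => by ext g; exact Category.assoc (Bpi.map f.unop) g q }

/-- The canonical map `k^!(X) ⟶ X` induced by the inclusions `Δⁿ ⊆ Bπ(Δⁿ)`. -/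
def kCan (X : SSet) : kSh X ⟶ X where
  app n := TypeCat.ofHom fun g => g.app n (spineEl n.unop)
  naturality n n' f := by
    ext g
    exact (congr_arg (g.app n') (spineEl_natural f.unop)).trans
      (NatTrans.naturality_apply g f (spineEl n.unop))

/-- An edge of a simplicial set is invertible if its classifying map extends along
`Δ¹ ⊆ Bπ(Δ¹)` (for a quasi-category this says precisely that the edge is invertible
in the homotopy category). -/
def invEdge (X : SSet) (e : X.obj (op (SimplexCategory.mk 1))) : Prop :=
  ∃ g : Bpi.obj (SimplexCategory.mk 1) ⟶ X,
    g.app (op (SimplexCategory.mk 1)) (spineEl (SimplexCategory.mk 1)) = e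

/-- The subcomplex `J(X) ⊆ X` of simplices all of whose edges are invertible;
for a quasi-category `X` this is the maximal Kan subcomplex. -/
def Jmax (X : SSet) : SSet where
  obj m := { x : X.obj m // ∀ f : SimplexCategory.mk 1 ⟶ m.unop, invEdge X (X.map f.op x) }
  map {m m'} g := TypeCat.ofHom fun x => ⟨X.map g x.1, fun f => by
    have h : X.map f.op (X.map g x.1) = X.map ((f ≫ g.unop).op) x.1 := by
      rw [op_comp, Quiver.Hom.op_unop, FunctorToTypes.map_comp_apply]
    rw [h]
    exact x.2 (f ≫ g.unop)⟩
  map_id m := by ext x; simp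
  map_comp f g := by ext x; simp

/-- The inclusion `J(X) ⊆ X`. -/
def Jincl (X : SSet) : Jmax X ⟶ X where
  app _ := TypeCat.ofHom fun x => x.1
  naturality _ _ _ := rfl

/-- Functoriality of `J`. -/
def Jmap {X Y : SSet} (q : X ⟶ Y) : Jmax X ⟶ Jmax Y where
  app m := TypeCat.ofHom fun x => ⟨q.app m x.1, fun f => by
    obtain ⟨g, hg⟩ := x.2 f
    exact ⟨g ≫ q, by
      show q.app _ (g.app _ _) = _
      rw [hg]
      exact NatTrans.naturality_apply q f.op x.1⟩⟩
  naturality m m' g := by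
    ext x
    apply Subtype.ext
    exact NatTrans.naturality_apply q g x.1

/-- The canonical map `k^!(X) ⟶ J(X)`. -/
def kCanJ (X : SSet) : kSh X ⟶ Jmax X where
  app n := TypeCat.ofHom fun g => ⟨g.app n (spineEl n.unop), fun f => by
    refine ⟨Bpi.map f ≫ g, ?_⟩
    exact (congr_arg (g.app _) (spineEl_natural f)).trans
      (NatTrans.naturality_apply g f.op (spineEl n.unop))⟩
  naturality n n' f := by
    ext g
    apply Subtype.ext
    exact (congr_arg (g.app n') (spineEl_natural f.unop)).trans
      (NatTrans.naturality_apply g f (spineEl n.unop))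

/-- Kan fibrations: right lifting property against all horn inclusions. -/
def IsKanFib {X Y : SSet} (q : X ⟶ Y) : Prop :=
  ∀ ⦃n : ℕ⦄ ⦃i : Fin (n + 1)⦄, HasLiftingProperty (SSet.horn n i).ι q

/-- Trivial Kan fibrations: right lifting property against all boundary inclusions. -/
def IsTrivFib {X Y : SSet} (q : X ⟶ Y) : Prop :=
  ∀ ⦃n : ℕ⦄, HasLiftingProperty (SSet.boundary n).ι q

noncomputable section

instance {m : SimplexCategoryᵒᵖ} : Subsingleton (Δ[0].obj m) := by
  constructor
  intro a b
  apply (SSet.stdSimplex.objEquiv).injective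
  ext i
  exact congr_arg Fin.val (Subsingleton.elim (α := Fin 1) _ _)

/-- The unique map to the terminal simplicial set `Δ[0]`. -/
def toPt (X : SSet) : X ⟶ Δ[0] where
  app m := TypeCat.ofHom fun _ => SSet.stdSimplex.objMk (OrderHom.const _ 0)
  naturality _ _ _ := by ext x; apply Subsingleton.elim

lemma toPt_unique {X : SSet} (f g : X ⟶ Δ[0]) : f = g :=
  NatTrans.ext (funext fun m => ConcreteCategory.hom_ext _ _ fun x => Subsingleton.elim _ _)

/-- An interval object: a simplicial set with two chosen endpoints. -/
structure SInterval where
  I : SSet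
  e0 : Δ[0] ⟶ I
  e1 : Δ[0] ⟶ I

/-- Homotopy of maps `X ⟶ Z` with respect to the cylinder `X × I`. -/
def SHtpy (c : SInterval) {X Z : SSet} (u v : X ⟶ Z) : Prop :=
  ∃ H : Limits.prod X c.I ⟶ Z,
    Limits.prod.lift (𝟙 X) (toPt X ≫ c.e0) ≫ H = u ∧
    Limits.prod.lift (𝟙 X) (toPt X ≫ c.e1) ≫ H = v

/-- Homotopy classes of maps `X ⟶ Z`. -/
def hoClasses (c : SInterval) (X Z : SSet) : Type :=
  Quot (SHtpy c (X := X) (Z := Z))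

lemma lift_map_endpoint {X Y I : SSet} (f : X ⟶ Y) (e : Δ[0] ⟶ I) :
    Limits.prod.lift (𝟙 X) (toPt X ≫ e) ≫ Limits.prod.map f (𝟙 I) =
      f ≫ Limits.prod.lift (𝟙 Y) (toPt Y ≫ e) := by
  have h : toPt X = f ≫ toPt Y := toPt_unique _ _
  rw [Limits.prod.lift_map, Limits.prod.comp_lift, h]
  simp

/-- Precomposition on homotopy classes. -/
def hoPrecomp (c : SInterval) {X Y : SSet} (f : X ⟶ Y) (Z : SSet) :
    hoClasses c Y Z → hoClasses c X Z :=
  Quot.map (fun u => f ≫ u) (fun u v h => by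
    obtain ⟨H, h0, h1⟩ := h
    exact ⟨Limits.prod.map f (𝟙 c.I) ≫ H,
      by rw [← Category.assoc, lift_map_endpoint, Category.assoc, h0],
      by rw [← Category.assoc, lift_map_endpoint, Category.assoc, h1]⟩)

/-- The Kan–Quillen interval `Δ¹`. -/
def kanSInterval : SInterval :=
  ⟨Δ[1], SSet.stdSimplex.map (SimplexCategory.δ 1),
    SSet.stdSimplex.map (SimplexCategory.δ 0)⟩

/-- The Joyal interval `E¹ = Bπ(Δ¹)`, the nerve of the free-standing isomorphism. -/
def joyalSInterval : SInterval :=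
  ⟨Bpi.obj (SimplexCategory.mk 1),
    stdToBpi.app (SimplexCategory.mk 0) ≫ Bpi.map (SimplexCategory.δ 1),
    stdToBpi.app (SimplexCategory.mk 0) ≫ Bpi.map (SimplexCategory.δ 0)⟩

/-- Kan complexes, with the horn-filling definition of `SSet.KanComplex` of the older
Mathlib (fillers for all horns `Λ[n, i]`, `n ≥ 0`). -/
def OldKanComplex (S : SSet) : Prop :=
  ∀ ⦃n : ℕ⦄ ⦃i : Fin (n + 1)⦄ (σ₀ : (SSet.horn n i : SSet) ⟶ S),
    ∃ σ : Δ[n] ⟶ S, σ₀ = (SSet.horn n i).ι ≫ σ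

/-- Weak homotopy equivalences (equivalences in the Kan–Quillen model structure),
characterized by homotopy classes of maps into Kan complexes. -/
def IsWeakEquiv {X Y : SSet} (f : X ⟶ Y) : Prop :=
  ∀ Z : SSet, OldKanComplex Z → Function.Bijective (hoPrecomp kanSInterval f Z)

/-- Weak categorical (Joyal) equivalences, characterized by `E¹`-homotopy classes of
maps into quasi-categories. -/
def IsJoyalEquiv {X Y : SSet} (f : X ⟶ Y) : Prop :=
  ∀ Z : SSet, SSet.Quasicategory Z → Function.Bijective (hoPrecomp joyalSInterval f Z)

/-- Fibrations in the Joyal model structure: right lifting property against all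
trivial cofibrations (monomorphisms which are Joyal equivalences). -/
def IsJoyalFib {X Y : SSet} (q : X ⟶ Y) : Prop :=
  ∀ ⦃A B : SSet⦄ (i : A ⟶ B), Mono i → IsJoyalEquiv i → HasLiftingProperty i q

end

namespace KBangAux

universe u

variable (m : ℕ)

/-- The poset of nonempty proper subsets of `Fin (m+1)`. -/
def J : Type := {S : Finset (Fin (m+1)) // S.Nonempty ∧ S ≠ Finset.univ}

instance : PartialOrder (J m) :=
  inferInstanceAs (PartialOrder {S : Finset (Fin (m+1)) // S.Nonempty ∧ S ≠ Finset.univ})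

instance : SmallCategory (J m) := Preorder.smallCategory _

/-- The order iso between `Fin (S.card - 1 + 1)` and a nonempty proper subset `S`. -/
def emb (S : J m) : Fin (S.1.card - 1 + 1) ≃o {x : Fin (m+1) // x ∈ S.1} :=
  S.1.orderIsoOfFin (Nat.succ_pred_eq_of_pos S.2.1.card_pos).symm

/-- The monotone injection `Fin (S.card - 1 + 1) → Fin (m+1)` for `S` as above. -/
def fev (S : J m) (i : Fin (S.1.card - 1 + 1)) : Fin (m + 1) := (emb m S i : Fin (m+1))

lemma fev_mem (S : J m) (i : Fin (S.1.card - 1 + 1)) : fev m S i ∈ S.1 := (emb m S i).2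

lemma fev_monotone (S : J m) : Monotone (fev m S) := fun _ _ h => (emb m S).monotone h

lemma fev_inj (S : J m) {i j : Fin (S.1.card - 1 + 1)} (h : fev m S i = fev m S j) : i = j :=
  (emb m S).injective (Subtype.ext h)

/-- The simplex corresponding to a nonempty proper subset. -/
abbrev DscObj (S : J m) : SimplexCategory := SimplexCategory.mk (S.1.card - 1)

/-- The map of simplices induced by an inclusion of subsets. -/
def DscMapFun {S T : J m} (h : S ≤ T) (i : Fin (S.1.card - 1 + 1)) :
    Fin (T.1.card - 1 + 1) :=
  (emb m T).symm ⟨fev m S i, h (fev_mem m S i)⟩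

lemma fev_DscMapFun {S T : J m} (h : S ≤ T) (i : Fin (S.1.card - 1 + 1)) :
    fev m T (DscMapFun m h i) = fev m S i :=
  congrArg Subtype.val ((emb m T).apply_symm_apply _)

lemma DscMapFun_monotone {S T : J m} (h : S ≤ T) : Monotone (DscMapFun m h) :=
  fun _ _ hij => (emb m T).symm.monotone (Subtype.mk_le_mk.mpr (fev_monotone m S hij))

lemma hom_ext' {a b : SimplexCategory} {f g : a ⟶ b}
    (h : ∀ i, f.toOrderHom i = g.toOrderHom i) : f = g :=
  SimplexCategory.Hom.ext _ _ (OrderHom.ext _ _ (funext h))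

/-- The diagram of simplices indexed by nonempty proper subsets. -/
def Dsc : J m ⥤ SimplexCategory where
  obj := DscObj m
  map {S T} f := SimplexCategory.mkHom ⟨DscMapFun m (leOfHom f), DscMapFun_monotone m _⟩
  map_id S := hom_ext' fun i => fev_inj m S (fev_DscMapFun m (le_refl S) i)
  map_comp {S T U} f g := hom_ext' fun i => fev_inj m U (by
    show fev m U (DscMapFun m (leOfHom (f ≫ g)) i)
        = fev m U (DscMapFun m (leOfHom g) (DscMapFun m (leOfHom f) i))
    rw [fev_DscMapFun, fev_DscMapFun, fev_DscMapFun])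

/-- The inclusion of the face indexed by `S` into `Δ[m]`. -/
def iota (S : J m) : DscObj m S ⟶ SimplexCategory.mk m :=
  SimplexCategory.mkHom ⟨fev m S, fev_monotone m S⟩

lemma iota_w {S T : J m} (f : S ⟶ T) : (Dsc m).map f ≫ iota m T = iota m S :=
  hom_ext' fun i => fev_DscMapFun m (leOfHom f) i

lemma stdExt {a : SimplexCategory} {p : SimplexCategoryᵒᵖ}
    {x y : (SSet.stdSimplex.{u}.obj a).obj p}
    (h : ∀ i, (SSet.stdSimplex.objEquiv.{u} (n := a) (m := p) x).toOrderHom i =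
      (SSet.stdSimplex.objEquiv.{u} (n := a) (m := p) y).toOrderHom i) : x = y :=
  (SSet.stdSimplex.objEquiv.{u} (n := a) (m := p)).injective (hom_ext' h)

/-- The leg of the boundary cocone at `S`. -/
def legStd (S : J m) : SSet.stdSimplex.{u}.obj (DscObj m S) ⟶ (SSet.boundary.{u} m : SSet.{u}) where
  app p := TypeCat.ofHom fun x => ⟨(SSet.stdSimplex.{u}.map (iota m S)).app p x, by
    intro hs
    apply S.2.2
    apply Finset.eq_univ_iff_forall.mpr
    intro a
    obtain ⟨i, hi⟩ := hs a
    rw [← hi]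
    exact fev_mem m S _⟩
  naturality p q g := by
    ext x
    rfl

lemma legStd_w {S T : J m} (f : S ⟶ T) :
    SSet.stdSimplex.{u}.map ((Dsc m).map f) ≫ legStd m T = legStd m S := by
  apply NatTrans.ext
  funext p
  ext x
  apply Subtype.ext
  show _ = (SSet.stdSimplex.{u}.map (iota m S)).app p x
  rw [← iota_w m f]
  rfl

/-- The cocone over the diagram of faces with apex `∂Δ[m]`. -/
def bCocone : Cocone (Dsc m ⋙ SSet.stdSimplex.{u}) where
  pt := (SSet.boundary.{u} m : SSet.{u})
  ι :=
    { app := legStd m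
      naturality := fun S T f => by
        simp only [Functor.comp_map, Functor.const_obj_map, Category.comp_id]
        exact legStd_w m f }

/-- The minimal subset supporting a simplex of the boundary. -/
def RJ {p : SimplexCategoryᵒᵖ} (x : ((SSet.boundary.{u} m : SSet.{u})).obj p) : J m :=
  ⟨Finset.image (SSet.stdSimplex.asOrderHom x.1) Finset.univ,
   Finset.univ_nonempty.image _,
   fun h => x.2 (fun a => by
     have ha : a ∈ Finset.image (SSet.stdSimplex.asOrderHom x.1) Finset.univ := h ▸ Finset.mem_univ a
     obtain ⟨i, _, hi⟩ := Finset.mem_image.mp ha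
     exact ⟨i, hi⟩)⟩

/-- The canonical preimage of a boundary simplex in its supporting face. -/
def preim {p : SimplexCategoryᵒᵖ} (x : ((SSet.boundary.{u} m : SSet.{u})).obj p) :
    (SSet.stdSimplex.{u}.obj (DscObj m (RJ m x))).obj p :=
  SSet.stdSimplex.objMk.{u}
    ⟨fun i => (emb m (RJ m x)).symm
        ⟨SSet.stdSimplex.asOrderHom x.1 i, Finset.mem_image.mpr ⟨i, Finset.mem_univ i, rfl⟩⟩,
     fun i j h => (emb m (RJ m x)).symm.monotone
        (Subtype.mk_le_mk.mpr ((SSet.stdSimplex.asOrderHom x.1).monotone h))⟩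

lemma fev_preim {p : SimplexCategoryᵒᵖ} (x : ((SSet.boundary.{u} m : SSet.{u})).obj p)
    (i : Fin (p.unop.len + 1)) :
    fev m (RJ m x) (SSet.stdSimplex.asOrderHom (preim m x) i) = SSet.stdSimplex.asOrderHom x.1 i :=
  congrArg Subtype.val ((emb m (RJ m x)).apply_symm_apply _)

lemma legStd_preim {p : SimplexCategoryᵒᵖ} (x : ((SSet.boundary.{u} m : SSet.{u})).obj p) :
    (legStd m (RJ m x)).app p (preim m x) = x :=
  Subtype.ext (stdExt fun i => fev_preim m x i)

/-- The boundary cocone is a colimit, pointwise. -/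
def isColimAt (p : SimplexCategoryᵒᵖ) :
    IsColimit (((evaluation SimplexCategoryᵒᵖ (Type u)).obj p).mapCocone (bCocone m)) where
  desc s := TypeCat.ofHom fun x => s.ι.app (RJ m x) (preim m x)
  fac s S := by
    ext (x : (SSet.stdSimplex.{u}.obj (DscObj m S)).obj p)
    have hle : RJ m ((legStd m S).app p x) ≤ S := by
      intro a ha
      obtain ⟨i, _, hi⟩ := Finset.mem_image.mp ha
      rw [← hi]
      exact fev_mem m S _
    have hw := s.w (homOfLE hle)
    have key : ∀ i, SSet.stdSimplex.asOrderHom (((Dsc m ⋙ SSet.stdSimplex.{u}).map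
        (homOfLE hle)).app p (preim m ((legStd m S).app p x))) i = SSet.stdSimplex.asOrderHom x i := by
      intro i
      apply fev_inj m S
      show fev m S (DscMapFun m hle (SSet.stdSimplex.asOrderHom
        (preim m ((legStd m S).app p x)) i)) = fev m S (SSet.stdSimplex.asOrderHom x i)
      rw [fev_DscMapFun]
      exact fev_preim m ((legStd m S).app p x) i
    change s.ι.app (RJ m ((legStd m S).app p x)) (preim m ((legStd m S).app p x)) = s.ι.app S x
    rw [← hw]
    exact congrArg (s.ι.app S) (stdExt key)
  uniq s f hf := by
    ext (x : (SSet.boundary.{u} m : SSet.{u}).obj p)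
    conv_lhs => rw [← legStd_preim m x]
    exact ConcreteCategory.congr_hom (hf (RJ m x)) (preim m x)

/-- The boundary cocone is a colimit. -/
def bIsColim : IsColimit (bCocone m) :=
  evaluationJointlyReflectsColimits _ (fun p => isColimAt m p)

variable (k : SSet.{u} ⥤ SSet.{0}) (e : SSet.stdSimplex.{u} ⋙ k ≅ Bpi)

/-- The map `Bπ(Δ^{#S-1}) ⟶ k(∂Δ[m])`. -/
def legB (S : J m) : Bpi.obj (DscObj m S) ⟶ k.obj ((SSet.boundary.{u} m : SSet.{u})) :=
  e.inv.app (DscObj m S) ≫ k.map (legStd m S)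

lemma legB_comp (S : J m) :
    legB m k e S ≫ (k.map ((SSet.boundary m).ι) ≫ e.hom.app (SimplexCategory.mk m)) =
      Bpi.map (iota m S) := by
  have h1 : legStd m S ≫ (SSet.boundary m).ι =
      SSet.stdSimplex.{u}.map (iota m S) := rfl
  have h2 : k.map (SSet.stdSimplex.{u}.map (iota m S)) ≫ e.hom.app (SimplexCategory.mk m)
      = e.hom.app (DscObj m S) ≫ Bpi.map (iota m S) := e.hom.naturality (iota m S)
  rw [legB, Category.assoc, ← Functor.map_comp_assoc, h1, h2, ← Category.assoc,
    Iso.inv_hom_id_app, Category.id_comp]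

lemma legB_w {S T : J m} (f : S ⟶ T) :
    Bpi.map ((Dsc m).map f) ≫ legB m k e T = legB m k e S := by
  have h1 : Bpi.map ((Dsc m).map f) ≫ e.inv.app (DscObj m T)
      = e.inv.app (DscObj m S) ≫ k.map (SSet.stdSimplex.{u}.map ((Dsc m).map f)) :=
    e.inv.naturality _
  exact (Category.assoc _ _ _).symm.trans ((congrArg (· ≫ k.map (legStd m T)) h1).trans
    ((Category.assoc _ _ _).trans ((congrArg (e.inv.app (DscObj m S) ≫ ·)
      (k.map_comp _ _).symm).trans
      (congrArg (fun g => e.inv.app (DscObj m S) ≫ k.map g) (legStd_w m f)))))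

lemma legB_jointly (hk : Limits.PreservesColimits k) {p : SimplexCategoryᵒᵖ}
    (x : (k.obj ((SSet.boundary.{u} m : SSet.{u}))).obj p) :
    ∃ (S : J m) (w : (Bpi.obj (DscObj m S)).obj p), (legB m k e S).app p w = x := by
  haveI := hk
  have hc2 := isColimitOfPreserves k (bIsColim m)
  have hc3 := isColimitOfPreserves ((evaluation SimplexCategoryᵒᵖ (Type 0)).obj p) hc2
  obtain ⟨S, v, hv⟩ := Types.jointly_surjective _ hc3 x
  refine ⟨S, (e.hom.app (DscObj m S)).app p v, ?_⟩
  show (k.map (legStd m S)).app p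
    ((e.inv.app (DscObj m S)).app p ((e.hom.app (DscObj m S)).app p v)) = x
  have h : (e.inv.app (DscObj m S)).app p ((e.hom.app (DscObj m S)).app p v) = v :=
    ConcreteCategory.congr_hom (congr_app (e.hom_inv_id_app (DscObj m S)) p) v
  rw [h]
  exact hv

/-- Constructor for simplices of `Bπ(Δᵃ)` from arbitrary functions. -/
def mkBpi {a : SimplexCategory} {p : SimplexCategoryᵒᵖ}
    (f : Fin (p.unop.len + 1) → Fin (a.len + 1)) : (Bpi.obj a).obj p where
  obj i := f i
  map _ := ⟨⟩
  map_id _ := rfl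
  map_comp _ _ := rfl

end KBangAux

/-- For `n ≥ 1`, the induced map `k₁(∂Δⁿ) ⟶ k₁(Δⁿ) = Bπ(Δⁿ)` is a monomorphism,
and `k₁(∂Δⁿ)` is the union of the images of the maps `Bπ(Δⁿ⁻¹) → Bπ(Δⁿ)` induced
by the coface maps `dⁱ`. -/
theorem kBang_boundary (k : SSet ⥤ SSet) (hk : Limits.PreservesColimits k)
    (e : SSet.stdSimplex ⋙ k ≅ Bpi) (n : ℕ) :
    Mono (k.map (SSet.boundary (n + 1)).ι ≫ e.hom.app (SimplexCategory.mk (n + 1))) ∧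
    (∀ (p : SimplexCategoryᵒᵖ) (y : (Bpi.obj (SimplexCategory.mk (n + 1))).obj p),
      (∃ x, (k.map (SSet.boundary (n + 1)).ι ≫
          e.hom.app (SimplexCategory.mk (n + 1))).app p x = y) ↔
      (∃ (i : Fin (n + 2)) (z : (Bpi.obj (SimplexCategory.mk n)).obj p),
        (Bpi.map (SimplexCategory.δ i)).app p z = y)) := by
  open KBangAux in
  have hsur : ∀ (p : SimplexCategoryᵒᵖ) (y : (Bpi.obj (SimplexCategory.mk (n + 1))).obj p),
      (∃ x, (k.map (SSet.boundary (n + 1)).ι ≫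
          e.hom.app (SimplexCategory.mk (n + 1))).app p x = y) ↔
      (∃ (i : Fin (n + 2)) (z : (Bpi.obj (SimplexCategory.mk n)).obj p),
        (Bpi.map (SimplexCategory.δ i)).app p z = y) := by
    intro p y
    constructor
    · rintro ⟨x, hx⟩
      obtain ⟨S, w, rfl⟩ := legB_jointly (n+1) k e hk x
      have hy : (Bpi.map (iota (n+1) S)).app p w = y := by
        rw [← hx]
        exact (ConcreteCategory.congr_hom (congr_app (legB_comp (n+1) k e S) p) w).symm
      obtain ⟨i, hi⟩ : ∃ i, i ∉ S.1 := by
        by_contra h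
        push_neg at h
        exact S.2.2 (Finset.eq_univ_iff_forall.mpr h)
      have hne : ∀ j, y.obj j ≠ i := by
        intro j h
        apply hi
        have hyj : y.obj j = fev (n+1) S (w.obj j) := by rw [← hy]; rfl
        rw [← h, hyj]
        exact fev_mem (n+1) S (w.obj j)
      refine ⟨i, mkBpi (fun j => Classical.choose (Fin.exists_succAbove_eq (hne j))), ?_⟩
      apply chaoticCA_ext
      intro j
      exact Classical.choose_spec (Fin.exists_succAbove_eq (hne j))
    · rintro ⟨i, z, rfl⟩
      have hmem : ∀ j, ((Bpi.map (SimplexCategory.δ i)).app p z).obj j ∈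
          ({i}ᶜ : Finset (Fin (n+2))) := by
        intro j
        exact Finset.mem_compl (α := Fin (n+2)).mpr
          (fun h => Fin.succAbove_ne i (z.obj j) (Finset.mem_singleton.mp h))
      have hS : ({i}ᶜ : Finset (Fin (n+2))).Nonempty := by
        rw [← Finset.card_pos, Finset.card_compl]
        simp
      have hSne : ({i}ᶜ : Finset (Fin (n+2))) ≠ Finset.univ := by
        intro h
        have h2 := Finset.mem_univ i
        rw [← h, Finset.mem_compl] at h2
        exact h2 (Finset.mem_singleton_self i)
      refine ⟨(legB (n+1) k e ⟨{i}ᶜ, hS, hSne⟩).app p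
        (mkBpi (fun j => (emb (n+1) ⟨{i}ᶜ, hS, hSne⟩).symm
          ⟨((Bpi.map (SimplexCategory.δ i)).app p z).obj j, hmem j⟩)), ?_⟩
      refine (ConcreteCategory.congr_hom (congr_app (legB_comp (n+1) k e ⟨{i}ᶜ, hS, hSne⟩) p) _).trans ?_
      apply chaoticCA_ext
      intro j
      exact congrArg Subtype.val ((emb (n+1) ⟨{i}ᶜ, hS, hSne⟩).apply_symm_apply _)
  refine ⟨?_, hsur⟩
  have hinj : ∀ p : SimplexCategoryᵒᵖ, Function.Injective
      ((k.map (SSet.boundary (n + 1)).ι ≫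
        e.hom.app (SimplexCategory.mk (n + 1))).app p) := by
    intro p x x' hxx
    obtain ⟨S, w, rfl⟩ := legB_jointly (n+1) k e hk x
    obtain ⟨T, w', rfl⟩ := legB_jointly (n+1) k e hk x'
    have hS := ConcreteCategory.congr_hom (congr_app (legB_comp (n+1) k e S) p) w
    have hT := ConcreteCategory.congr_hom (congr_app (legB_comp (n+1) k e T) p) w'
    have hval : ∀ j, fev (n+1) S (w.obj j) = fev (n+1) T (w'.obj j) := by
      intro j
      exact congrArg (fun c => c.obj j) ((hS.symm.trans hxx).trans hT)
    have hsubS : ∀ a ∈ Finset.image (fun j => fev (n+1) S (w.obj j)) Finset.univ,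
        a ∈ S.1 := by
      intro a ha
      obtain ⟨j, _, rfl⟩ := Finset.mem_image.mp ha
      exact fev_mem (n+1) S (w.obj j)
    have hsubT : ∀ a ∈ Finset.image (fun j => fev (n+1) S (w.obj j)) Finset.univ,
        a ∈ T.1 := by
      intro a ha
      obtain ⟨j, _, rfl⟩ := Finset.mem_image.mp ha
      rw [hval j]
      exact fev_mem (n+1) T (w'.obj j)
    set R : J (n+1) := ⟨Finset.image (fun j => fev (n+1) S (w.obj j)) Finset.univ,
      Finset.univ_nonempty.image _,
      fun h => S.2.2 (Finset.eq_univ_iff_forall.mpr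
        (fun a => hsubS a (h ▸ Finset.mem_univ a)))⟩ with hRdef
    have hRS : R ≤ S := hsubS
    have hRT : R ≤ T := hsubT
    set u : (Bpi.obj (DscObj (n+1) R)).obj p := mkBpi (fun j => (emb (n+1) R).symm
      ⟨fev (n+1) S (w.obj j), Finset.mem_image.mpr ⟨j, Finset.mem_univ j, rfl⟩⟩) with hu
    have hwu : (Bpi.map ((Dsc (n+1)).map (homOfLE hRS))).app p u = w := by
      apply chaoticCA_ext
      intro j
      show DscMapFun (n+1) hRS (u.obj j) = w.obj j
      refine fev_inj (n+1) S ?_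
      exact (fev_DscMapFun (n+1) hRS (u.obj j)).trans
        (congrArg Subtype.val ((emb (n+1) R).apply_symm_apply _))
    have hw'u : (Bpi.map ((Dsc (n+1)).map (homOfLE hRT))).app p u = w' := by
      apply chaoticCA_ext
      intro j
      show DscMapFun (n+1) hRT (u.obj j) = w'.obj j
      refine fev_inj (n+1) T ?_
      exact (fev_DscMapFun (n+1) hRT (u.obj j)).trans
        ((congrArg Subtype.val ((emb (n+1) R).apply_symm_apply _)).trans (hval j))
    calc (legB (n+1) k e S).app p w
        = (legB (n+1) k e S).app p
            ((Bpi.map ((Dsc (n+1)).map (homOfLE hRS))).app p u) := by rw [hwu]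
      _ = (legB (n+1) k e R).app p u := by
            rw [← legB_w (n+1) k e (homOfLE hRS)]; rfl
      _ = (legB (n+1) k e T).app p
            ((Bpi.map ((Dsc (n+1)).map (homOfLE hRT))).app p u) :=
            (ConcreteCategory.congr_hom (congr_app (legB_w (n+1) k e (homOfLE hRT)) p) u).symm
      _ = (legB (n+1) k e T).app p w' := by rw [hw'u]
  haveI : ∀ p, Mono ((k.map (SSet.boundary (n + 1)).ι ≫
      e.hom.app (SimplexCategory.mk (n + 1))).app p) :=
    fun p => (mono_iff_injective _).mpr (hinj p)
  exact NatTrans.mono_of_mono_app _
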